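/- Let K be a field, R = K[x_1,…,x_n], I ⊆ R a monomial ideal, ℓ a positive integer, v a square-free monomial of R with v ∈ I^ℓ, and 𝔭 a prime monomial ideal of R such that, for some positive integer s, 𝔭\x_i ∉ Ass(R/(I\x_i)^s) for every variable x_i dividing v. If 𝔭 ∈ Ass(R/I^s), then s > ℓ. -/

import Mathlib

open MvPolynomial

/-- Deletion of the variable `x i` from a monomial ideal: set `x i = 0` in every generator. -/
noncomputable def deleteVar {K : Type*} [Field K] {n : ℕ} (i : Fin n)
    (I : Ideal (MvPolynomial (Fin n) K)) : Ideal (MvPolynomial (Fin n) K) :=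
  I.map (aeval fun j => if j = i then (0 : MvPolynomial (Fin n) K) else X j).toRingHom

namespace StmtAux

variable {K : Type*} [Field K] {n : ℕ}

lemma ann_mk_eq_colon (J : Ideal (MvPolynomial (Fin n) K)) (f : MvPolynomial (Fin n) K) :
    (Submodule.span (MvPolynomial (Fin n) K)
      {(Ideal.Quotient.mk J f : MvPolynomial (Fin n) K ⧸ J)}).annihilator
      = J.colon (Ideal.span {f}) := by
  ext r
  rw [Submodule.mem_annihilator_span_singleton, Ideal.mem_colon_span_singleton]
  have h : r • (Ideal.Quotient.mk J f) = Ideal.Quotient.mk J (r * f) := rfl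
  rw [h, Ideal.Quotient.eq_zero_iff_mem]

lemma support_mono1 (m : Fin n →₀ ℕ) : (monomial m (1:K)).support = {m} := by
  classical rw [support_monomial, if_neg one_ne_zero]

lemma mono_mem_span_iff {S : Set (Fin n →₀ ℕ)} {m : Fin n →₀ ℕ} :
    monomial m (1:K) ∈ Ideal.span ((fun d => monomial d (1 : K)) '' S) ↔ ∃ d ∈ S, d ≤ m := by
  rw [mem_ideal_span_monomial_image, support_mono1]
  simp

lemma mono_mul_mono (a b : Fin n →₀ ℕ) :
    (monomial a (1:K)) * monomial b 1 = monomial (a+b) 1 := by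
  rw [monomial_mul, one_mul]

lemma X_mul_mono (j : Fin n) (w : Fin n →₀ ℕ) :
    (X j : MvPolynomial (Fin n) K) * monomial w 1 = monomial (Finsupp.single j 1 + w) 1 := by
  rw [show (X j : MvPolynomial (Fin n) K) = monomial (Finsupp.single j 1) 1 from rfl,
    monomial_mul, one_mul]

lemma mono_zero_one : (monomial (0 : Fin n →₀ ℕ) (1:K)) = 1 := by
  rw [← C_apply, C_1]

lemma pow_span_monomial (S : Set (Fin n →₀ ℕ)) (s : ℕ) :
    ∃ S' : Set (Fin n →₀ ℕ),
      (Ideal.span ((fun d => monomial d (1 : K)) '' S)) ^ s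
        = Ideal.span ((fun d => monomial d (1 : K)) '' S') := by
  induction s with
  | zero =>
    refine ⟨{0}, ?_⟩
    rw [pow_zero, Ideal.one_eq_top, Set.image_singleton, mono_zero_one,
      Ideal.span_singleton_one]
  | succ s ih =>
    obtain ⟨S', hS'⟩ := ih
    refine ⟨{d | ∃ a ∈ S', ∃ b ∈ S, d = a + b}, ?_⟩
    rw [pow_succ, hS', Ideal.span_mul_span']
    congr 1
    ext x
    constructor
    · rintro ⟨_, ⟨a, ha, rfl⟩, _, ⟨b, hb, rfl⟩, rfl⟩
      exact ⟨a + b, ⟨a, ha, b, hb, rfl⟩, (mono_mul_mono a b).symm⟩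
    · rintro ⟨d, ⟨a, ha, b, hb, rfl⟩, rfl⟩
      exact ⟨_, ⟨a, ha, rfl⟩, _, ⟨b, hb, rfl⟩, mono_mul_mono a b⟩

lemma aeval_kill_monomial_of {P : Fin n → Prop} [DecidablePred P] {d : Fin n →₀ ℕ}
    (h : ∀ j, P j → d j = 0) (c : K) :
    aeval (fun j => if P j then (0 : MvPolynomial (Fin n) K) else X j) (monomial d c)
      = monomial d c := by
  rw [aeval_monomial, monomial_eq, algebraMap_eq]
  congr 1
  apply Finsupp.prod_congr
  intro j hj
  rw [if_neg]
  intro hP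
  exact (Finsupp.mem_support_iff.mp hj) (h j hP)

lemma aeval_kill_monomial_ne {P : Fin n → Prop} [DecidablePred P] {d : Fin n →₀ ℕ}
    {j0 : Fin n} (hP : P j0) (hd : d j0 ≠ 0) (c : K) :
    aeval (fun j => if P j then (0 : MvPolynomial (Fin n) K) else X j) (monomial d c) = 0 := by
  rw [aeval_monomial, Finsupp.prod,
    Finset.prod_eq_zero (Finsupp.mem_support_iff.mpr hd)]
  · ring
  · rw [if_pos hP, zero_pow hd]

lemma isPrime_span_X_image (B : Set (Fin n)) :
    (Ideal.span (X '' B : Set (MvPolynomial (Fin n) K))).IsPrime := by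
  classical
  set ψ : MvPolynomial (Fin n) K →ₐ[K] MvPolynomial (Fin n) K :=
    (aeval fun j => if j ∈ B then (0 : MvPolynomial (Fin n) K) else X j) with hψ
  have hker : Ideal.span (X '' B : Set (MvPolynomial (Fin n) K)) = RingHom.ker ψ.toRingHom := by
    apply le_antisymm
    · rw [Ideal.span_le]
      rintro _ ⟨j, hj, rfl⟩
      rw [SetLike.mem_coe, RingHom.mem_ker]
      show ψ (X j) = 0
      rw [hψ, aeval_X, if_pos hj]
    · intro f hf
      rw [RingHom.mem_ker] at hf
      have hf' : ψ f = 0 := hf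
      rw [mem_ideal_span_X_image]
      intro m hm
      by_contra hcon
      push_neg at hcon
      have hcoeff : coeff m (ψ f) = coeff m f := by
        conv_lhs => rw [f.as_sum]
        rw [map_sum, coeff_sum]
        rw [Finset.sum_eq_single m]
        · rw [hψ, aeval_kill_monomial_of (P := (· ∈ B)) hcon, coeff_monomial, if_pos rfl]
        · intro v hv hvm
          by_cases hvB : ∃ j, j ∈ B ∧ v j ≠ 0
          · obtain ⟨j0, hj0, hvj0⟩ := hvB
            rw [hψ, aeval_kill_monomial_ne (P := (· ∈ B)) hj0 hvj0, coeff_zero]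
          · push_neg at hvB
            rw [hψ, aeval_kill_monomial_of (P := (· ∈ B)) hvB, coeff_monomial, if_neg hvm]
        · intro hms
          rw [MvPolynomial.notMem_support_iff.mp hms, monomial_zero, map_zero, coeff_zero]
      rw [hf', coeff_zero] at hcoeff
      exact (MvPolynomial.mem_support_iff.mp hm) hcoeff.symm
  rw [hker]
  exact RingHom.ker_isPrime _

lemma deleteVar_span_monomial (i : Fin n) (S : Set (Fin n →₀ ℕ)) :
    deleteVar i (Ideal.span ((fun d => monomial d (1 : K)) '' S))
      = Ideal.span ((fun d => monomial d (1 : K)) '' {d ∈ S | d i = 0}) := by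
  unfold deleteVar
  rw [Ideal.map_span]
  apply le_antisymm
  · rw [Ideal.span_le]
    rintro _ ⟨_, ⟨d, hd, rfl⟩, rfl⟩
    show (aeval fun j => if j = i then (0 : MvPolynomial (Fin n) K) else X j)
      (monomial d 1) ∈ _
    by_cases hdi : d i = 0
    · rw [aeval_kill_monomial_of (P := (· = i)) (fun j hj => by rw [hj]; exact hdi)]
      exact Ideal.subset_span ⟨d, ⟨hd, hdi⟩, rfl⟩
    · rw [aeval_kill_monomial_ne (P := (· = i)) rfl hdi]
      exact (Ideal.span _).zero_mem
  · rw [Ideal.span_le]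
    rintro _ ⟨d, ⟨hd, hdi⟩, rfl⟩
    apply Ideal.subset_span
    refine ⟨monomial d 1, ⟨d, hd, rfl⟩, ?_⟩
    show (aeval fun j => if j = i then (0 : MvPolynomial (Fin n) K) else X j)
      (monomial d 1) = _
    exact aeval_kill_monomial_of (P := (· = i)) (fun j hj => by rw [hj]; exact hdi) 1

lemma deleteVar_span_X (i : Fin n) (A : Set (Fin n)) :
    deleteVar i (Ideal.span (X '' A) : Ideal (MvPolynomial (Fin n) K))
      = Ideal.span (X '' (A \ {i})) := by
  unfold deleteVar
  rw [Ideal.map_span]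
  apply le_antisymm
  · rw [Ideal.span_le]
    rintro _ ⟨_, ⟨j, hj, rfl⟩, rfl⟩
    show (aeval fun j => if j = i then (0 : MvPolynomial (Fin n) K) else X j) (X j) ∈ _
    rw [aeval_X]
    by_cases hji : j = i
    · rw [if_pos hji]; exact (Ideal.span _).zero_mem
    · rw [if_neg hji]
      exact Ideal.subset_span ⟨j, ⟨hj, fun h => hji (Set.mem_singleton_iff.mp h)⟩, rfl⟩
  · rw [Ideal.span_le]
    rintro _ ⟨j, ⟨hjA, hji⟩, rfl⟩
    apply Ideal.subset_span
    refine ⟨X j, ⟨j, hjA, rfl⟩, ?_⟩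
    show (aeval fun j => if j = i then (0 : MvPolynomial (Fin n) K) else X j) (X j) = _
    rw [aeval_X, if_neg (fun h => hji (Set.mem_singleton_iff.mpr h))]

lemma exists_monomial_witness {S' : Set (Fin n →₀ ℕ)} {J : Ideal (MvPolynomial (Fin n) K)}
    (hJ : J = Ideal.span ((fun d => monomial d (1 : K)) '' S'))
    {A : Set (Fin n)} {p : Ideal (MvPolynomial (Fin n) K)}
    (hpA : p = Ideal.span (X '' A)) (hp : p.IsPrime)
    (hass : IsAssociatedPrime p (MvPolynomial (Fin n) K ⧸ J)) :
    ∃ w : Fin n →₀ ℕ, monomial w (1:K) ∉ J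
      ∧ p = J.colon (Ideal.span {monomial w (1:K)}) := by
  classical
  obtain ⟨-, x, hx⟩ := isAssociatedPrime_iff.mp hass
  obtain ⟨f, rfl⟩ := Ideal.Quotient.mk_surjective x
  rw [Submodule.bot_colon', ann_mk_eq_colon] at hx
  have hstep1 : ∀ m ∈ f.support, p ≤ J.colon (Ideal.span {monomial m (1:K)}) := by
    intro m hm
    rw [hpA, Ideal.span_le]
    rintro _ ⟨j, hjA, rfl⟩
    rw [SetLike.mem_coe, Ideal.mem_colon_span_singleton]
    have hXjf : X j * f ∈ J := by
      have hXj : X j ∈ p := hpA ▸ Ideal.subset_span ⟨j, hjA, rfl⟩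
      rw [hx] at hXj
      exact Ideal.mem_colon_span_singleton.mp hXj
    have hsup : Finsupp.single j 1 + m ∈ (X j * f).support := by
      rw [MvPolynomial.mem_support_iff, coeff_X_mul]
      exact MvPolynomial.mem_support_iff.mp hm
    rw [hJ] at hXjf
    obtain ⟨d, hdS, hdle⟩ := mem_ideal_span_monomial_image.mp hXjf _ hsup
    rw [hJ, X_mul_mono, mono_mem_span_iff]
    exact ⟨d, hdS, hdle⟩
  set F₂ := f.support.filter (fun m => monomial m (1:K) ∉ J) with hF₂
  have hstep3 : F₂.inf (fun m => J.colon (Ideal.span {monomial m (1:K)})) ≤ p := by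
    intro g hg
    have hgf : g * f ∈ J := by
      have hrw : g * f = ∑ m ∈ f.support, g * monomial m (coeff m f) := by
        conv_lhs => rw [f.as_sum, Finset.mul_sum]
      rw [hrw]
      apply Ideal.sum_mem
      intro m hm
      have hmono : g * monomial m (coeff m f) = C (coeff m f) * (g * monomial m 1) := by
        rw [show monomial m (coeff m f) = C (coeff m f) * monomial m 1 by
          rw [C_mul_monomial, mul_one]]
        ring
      rw [hmono]
      by_cases hmJ : monomial m (1:K) ∈ J
      · exact Ideal.mul_mem_left _ _ (Ideal.mul_mem_left _ _ hmJ)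
      · have hmF : m ∈ F₂ := Finset.mem_filter.mpr ⟨hm, hmJ⟩
        have hgm : g ∈ J.colon (Ideal.span {monomial m (1:K)}) := by
          have h2 : F₂.inf (fun m => J.colon (Ideal.span {monomial m (1:K)}))
              ≤ J.colon (Ideal.span {monomial m (1:K)}) := Finset.inf_le hmF
          exact h2 hg
        rw [Ideal.mem_colon_span_singleton] at hgm
        exact Ideal.mul_mem_left _ _ hgm
    rw [hx]
    exact Ideal.mem_colon_span_singleton.mpr hgf
  have hprodle : (∏ m ∈ F₂, J.colon (Ideal.span {monomial m (1:K)})) ≤ p :=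
    le_trans Ideal.prod_le_inf hstep3
  obtain ⟨m, hmF, hle⟩ := hp.prod_le.mp hprodle
  exact ⟨m, (Finset.mem_filter.mp hmF).2,
    le_antisymm (hstep1 m (Finset.mem_filter.mp hmF).1) hle⟩

lemma prod_X_mono (T : Finset (Fin n)) :
    (∏ i ∈ T, X i : MvPolynomial (Fin n) K)
      = monomial (∑ i ∈ T, Finsupp.single i 1) 1 := by
  classical
  induction T using Finset.induction_on with
  | empty => rw [Finset.prod_empty, Finset.sum_empty, mono_zero_one]
  | insert _ _ h ih =>
    rw [Finset.prod_insert h, Finset.sum_insert h, ih,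
      show (X _ : MvPolynomial (Fin n) K) = monomial (Finsupp.single _ 1) 1 from rfl,
      monomial_mul, one_mul]

end StmtAux

open StmtAux

theorem stmt_1 {K : Type*} [Field K] {n : ℕ}
    (I : Ideal (MvPolynomial (Fin n) K))
    (hI : ∃ S : Set (Fin n →₀ ℕ),
      I = Ideal.span ((fun d => (monomial d (1 : K))) '' S))
    (ℓ : ℕ) (hℓ : 1 ≤ ℓ)
    (T : Finset (Fin n)) (hv : (∏ i ∈ T, X i) ∈ I ^ ℓ)
    (A : Set (Fin n)) (p : Ideal (MvPolynomial (Fin n) K))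
    (hpA : p = Ideal.span (X '' A)) (hp : p.IsPrime)
    (s : ℕ) (hs : 1 ≤ s)
    (hdel : ∀ i ∈ T,
      deleteVar i p ∉
        associatedPrimes (MvPolynomial (Fin n) K)
          ((MvPolynomial (Fin n) K) ⧸ (deleteVar i I) ^ s))
    (hass : p ∈ associatedPrimes (MvPolynomial (Fin n) K) ((MvPolynomial (Fin n) K) ⧸ I ^ s)) :
    ℓ < s := by
  classical
  by_contra hcon
  push_neg at hcon
  obtain ⟨S, hS⟩ := hI
  obtain ⟨S', hJ0⟩ := pow_span_monomial (K := K) S s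
  have hJ' : I ^ s = Ideal.span ((fun d => monomial d (1 : K)) '' S') := by
    rw [hS]; exact hJ0
  have hvs : (∏ i ∈ T, X i) ∈ I ^ s := Ideal.pow_le_pow_right hcon hv
  obtain ⟨w, hwJ, hwp⟩ := exists_monomial_witness hJ' hpA hp hass
  have hex : ∃ i ∈ T, w i = 0 := by
    by_contra hno
    push_neg at hno
    set vT : Fin n →₀ ℕ := ∑ i ∈ T, Finsupp.single i 1 with hvT
    have hle : vT ≤ w := by
      rw [Finsupp.le_def]
      intro j
      rw [hvT, Finsupp.finset_sum_apply]
      rw [show (∑ i ∈ T, Finsupp.single i 1 j) = ∑ i ∈ T, if i = j then 1 else 0 by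
        apply Finset.sum_congr rfl; intro i _; rw [Finsupp.single_apply]]
      rw [Finset.sum_ite_eq']
      by_cases hjT : j ∈ T
      · rw [if_pos hjT]
        exact Nat.one_le_iff_ne_zero.mpr (hno j hjT)
      · rw [if_neg hjT]
        exact Nat.zero_le _
    apply hwJ
    have hsplit : monomial w (1:K) = monomial (w - vT) 1 * monomial vT 1 := by
      rw [mono_mul_mono, tsub_add_cancel_of_le hle]
    rw [hsplit]
    apply Ideal.mul_mem_left
    rw [← prod_X_mono]
    exact hvs
  obtain ⟨i, hiT, hwi⟩ := hex
  apply hdel i hiT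
  have hdelpow : (deleteVar i I) ^ s
      = Ideal.span ((fun d => monomial d (1:K)) '' {d ∈ S' | d i = 0}) := by
    have h1 : (deleteVar i I) ^ s = deleteVar i (I ^ s) := by
      unfold deleteVar; rw [Ideal.map_pow]
    rw [h1, hJ', deleteVar_span_monomial]
  have hdelp : deleteVar i p = Ideal.span (X '' (A \ {i})) := by
    rw [hpA, deleteVar_span_X]
  rw [hdelpow, hdelp]
  rw [AssociatedPrimes.mem_iff, isAssociatedPrime_iff]
  set Jd := Ideal.span ((fun d => monomial d (1:K)) '' {d ∈ S' | d i = 0}) with hJd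
  refine ⟨isPrime_span_X_image _, ⟨Ideal.Quotient.mk _ (monomial w 1), ?_⟩⟩
  rw [Submodule.bot_colon', ann_mk_eq_colon]
  apply le_antisymm
  · rw [Ideal.span_le]
    rintro _ ⟨j, hjA', rfl⟩
    have hjA : j ∈ A := hjA'.1
    have hji : j ≠ i := fun h => hjA'.2 (Set.mem_singleton_iff.mpr h)
    rw [SetLike.mem_coe, Ideal.mem_colon_span_singleton]
    have hXj : X j * monomial w (1:K) ∈ I ^ s := by
      have hXp : X j ∈ p := hpA ▸ Ideal.subset_span ⟨j, hjA, rfl⟩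
      rw [hwp] at hXp
      exact Ideal.mem_colon_span_singleton.mp hXp
    rw [hJ'] at hXj
    rw [X_mul_mono] at hXj ⊢
    rw [mono_mem_span_iff] at hXj
    rw [hJd, mono_mem_span_iff]
    obtain ⟨d, hdS, hdle⟩ := hXj
    have hdi : d i = 0 := by
      have h1 := Finsupp.le_def.mp hdle i
      rw [Finsupp.add_apply, Finsupp.single_apply, if_neg hji, hwi] at h1
      exact Nat.le_zero.mp h1
    exact ⟨d, ⟨hdS, hdi⟩, hdle⟩
  · intro g hg
    rw [Ideal.mem_colon_span_singleton] at hg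
    rw [mem_ideal_span_X_image]
    intro m hm
    have hsup : m + w ∈ (g * monomial w (1:K)).support := by
      rw [MvPolynomial.mem_support_iff, coeff_mul_monomial, mul_one]
      exact MvPolynomial.mem_support_iff.mp hm
    rw [hJd] at hg
    obtain ⟨d, ⟨hdS, hdi⟩, hdle⟩ := mem_ideal_span_monomial_image.mp hg _ hsup
    have hdle' : d ≤ m.erase i + w := by
      rw [Finsupp.le_def]
      intro j
      by_cases hj : j = i
      · subst hj
        rw [Finsupp.add_apply, Finsupp.erase_same, hwi, hdi]
      · have h1 := Finsupp.le_def.mp hdle j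
        rw [Finsupp.add_apply] at h1 ⊢
        rw [Finsupp.erase_ne hj]
        exact h1
    have hm'p : monomial (m.erase i) (1:K) ∈ p := by
      rw [hwp, Ideal.mem_colon_span_singleton, mono_mul_mono, hJ', mono_mem_span_iff]
      exact ⟨d, hdS, hdle'⟩
    rw [hpA, mem_ideal_span_X_image] at hm'p
    obtain ⟨j, hjA, hmj⟩ := hm'p _ (by rw [support_mono1]; exact Finset.mem_singleton_self _)
    have hji : j ≠ i := by
      rintro rfl
      exact hmj Finsupp.erase_same
    refine ⟨j, ⟨hjA, fun h => hji (Set.mem_singleton_iff.mp h)⟩, ?_⟩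
    rwa [Finsupp.erase_ne hji] at hmj
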